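/- In G = ⟨⟨a₁, a₃⟩⟩ ⊂ Aut(T) (with a₁ = σ, a₃ = (a₂,a₃), a₂ = (a₃⁻¹,a₂⁻¹)σ, a₁a₂a₃ = id), the normal closure U of the closed subgroup generated by a₂a₃⁻¹ is topologically generated by γ₁ = a₂a₃⁻¹ and γ₂ = a₃⁻¹a₂. -/

import Mathlib

open Equiv

/-- Vertices of the infinite rooted binary tree: finite words over `Bool`.
The parent of a nonempty word is `dropLast`. -/
abbrev Wd := List Bool

/-- The group `Ω = Aut(T)` of automorphisms of the infinite rooted binary tree,
realized as the subgroup of permutations of the vertex set preserving length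
(levels) and the parent relation. -/
def OmegaSG : Subgroup (Equiv.Perm Wd) where
  carrier := {σ | (∀ w, (σ w).length = w.length) ∧ ∀ w, (σ w).dropLast = σ w.dropLast}
  one_mem' := ⟨fun _ => rfl, fun _ => rfl⟩
  mul_mem' := by
    rintro σ τ ⟨hσl, hσd⟩ ⟨hτl, hτd⟩
    refine ⟨fun w => ?_, fun w => ?_⟩
    · simp [Equiv.Perm.mul_apply, hσl, hτl]
    · simp [Equiv.Perm.mul_apply, hσd, hτd]
  inv_mem' := by
    rintro σ ⟨hl, hd⟩
    refine ⟨fun w => ?_, fun w => ?_⟩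
    · have := hl (σ⁻¹ w)
      rw [show σ (σ⁻¹ w) = w from σ.apply_symm_apply w] at this
      exact this.symm
    · apply σ.injective
      have := hd (σ⁻¹ w)
      rw [show σ (σ⁻¹ w) = w from σ.apply_symm_apply w] at this
      rw [← this]
      simp

/-- The section pairing: `(u,v)` acts as `u` on the subtree rooted at `false`
and as `v` on the subtree rooted at `true`. -/
def pairFun (f g : Wd → Wd) : Wd → Wd
  | [] => []
  | false :: w => false :: f w
  | true :: w => true :: g w

@[simp] lemma pairFun_nil (f g : Wd → Wd) : pairFun f g [] = [] := rfl
@[simp] lemma pairFun_false (f g : Wd → Wd) (w : Wd) :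
    pairFun f g (false :: w) = false :: f w := rfl
@[simp] lemma pairFun_true (f g : Wd → Wd) (w : Wd) :
    pairFun f g (true :: w) = true :: g w := rfl

lemma pairFun_comp (f g f' g' : Wd → Wd) (hf : ∀ w, f (f' w) = w) (hg : ∀ w, g (g' w) = w) :
    ∀ w, pairFun f g (pairFun f' g' w) = w := by
  rintro (_ | ⟨(_|_), w⟩) <;> simp [hf, hg]

/-- The permutation `(u,v)` of the tree. -/
def pairPerm (u v : Equiv.Perm Wd) : Equiv.Perm Wd where
  toFun := pairFun u v
  invFun := pairFun u.symm v.symm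
  left_inv := pairFun_comp _ _ _ _ (fun w => u.symm_apply_apply w) (fun w => v.symm_apply_apply w)
  right_inv := pairFun_comp _ _ _ _ (fun w => u.apply_symm_apply w) (fun w => v.apply_symm_apply w)

@[simp] lemma pairPerm_apply (u v : Equiv.Perm Wd) (w : Wd) :
    pairPerm u v w = pairFun u v w := rfl

/-- The first-level swap `σ`. -/
def swapPerm : Equiv.Perm Wd where
  toFun w := match w with | [] => [] | b :: w => (!b) :: w
  invFun w := match w with | [] => [] | b :: w => (!b) :: w
  left_inv := by rintro (_ | ⟨b, w⟩) <;> simp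
  right_inv := by rintro (_ | ⟨b, w⟩) <;> simp

@[simp] lemma swapPerm_nil : swapPerm [] = [] := rfl
@[simp] lemma swapPerm_cons (b : Bool) (w : Wd) : swapPerm (b :: w) = (!b) :: w := rfl

lemma swapPerm_mem : swapPerm ∈ OmegaSG := by
  constructor
  · rintro (_ | ⟨b, w⟩) <;> simp
  · rintro (_ | ⟨b, w⟩)
    · simp
    · rcases eq_or_ne w [] with rfl | hw
      · simp
      · simp only [swapPerm_cons, List.dropLast_cons_of_ne_nil hw]

lemma mem_omega_length {u : Equiv.Perm Wd} (hu : u ∈ OmegaSG) (w : Wd) :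
    (u w).length = w.length := hu.1 w

lemma mem_omega_ne_nil {u : Equiv.Perm Wd} (hu : u ∈ OmegaSG) {w : Wd} (hw : w ≠ []) :
    u w ≠ [] := by
  intro h
  exact hw (List.eq_nil_of_length_eq_zero (by rw [← hu.1 w, h]; rfl))

lemma mem_omega_nil {u : Equiv.Perm Wd} (hu : u ∈ OmegaSG) : u [] = [] :=
  List.eq_nil_of_length_eq_zero (hu.1 [])

lemma pairPerm_mem {u v : Equiv.Perm Wd} (hu : u ∈ OmegaSG) (hv : v ∈ OmegaSG) :
    pairPerm u v ∈ OmegaSG := by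
  constructor
  · rintro (_ | ⟨(_|_), w⟩) <;> simp [hu.1, hv.1]
  · rintro (_ | ⟨(_|_), w⟩)
    · simp
    · rcases eq_or_ne w [] with rfl | hw
      · simp [mem_omega_nil hu]
      · simp only [pairPerm_apply, pairFun_false, List.dropLast_cons_of_ne_nil hw,
          List.dropLast_cons_of_ne_nil (mem_omega_ne_nil hu hw)]
        rw [hu.2]
    · rcases eq_or_ne w [] with rfl | hw
      · simp [mem_omega_nil hv]
      · simp only [pairPerm_apply, pairFun_true, List.dropLast_cons_of_ne_nil hw,
          List.dropLast_cons_of_ne_nil (mem_omega_ne_nil hv hw)]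
        rw [hv.2]

/-- `(u,v)` as an element of `Ω`. -/
def pairOm (u v : OmegaSG) : OmegaSG := ⟨pairPerm u.1 v.1, pairPerm_mem u.2 v.2⟩

/-- `σ` as an element of `Ω`. -/
def swapOm : OmegaSG := ⟨swapPerm, swapPerm_mem⟩

/-! ### Levels, restriction, sign, odometers -/

/-- Level `n` of the tree: words of length `n`. -/
abbrev Lv (n : ℕ) := {w : Wd // w.length = n}

instance fintypeLv (n : ℕ) : Fintype (Lv n) := by
  apply Fintype.ofSurjective (fun g : Fin n → Bool => (⟨List.ofFn g, List.length_ofFn (f := g)⟩ : Lv n))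
  rintro ⟨w, rfl⟩
  exact ⟨w.get, Subtype.ext (List.ofFn_get w)⟩

/-- The permutation induced by `g ∈ Ω` on level `n`. -/
def levelPerm (n : ℕ) (g : OmegaSG) : Equiv.Perm (Lv n) where
  toFun w := ⟨g.1 w.1, by rw [mem_omega_length g.2, w.2]⟩
  invFun w := ⟨(g⁻¹ : OmegaSG).1 w.1, by rw [mem_omega_length (g⁻¹ : OmegaSG).2, w.2]⟩
  left_inv w := Subtype.ext (by simp)
  right_inv w := Subtype.ext (by simp)

/-- Restriction to level `n` as a group homomorphism. -/
def levelHom (n : ℕ) : OmegaSG →* Equiv.Perm (Lv n) where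
  toFun := levelPerm n
  map_one' := Equiv.ext fun w => Subtype.ext rfl
  map_mul' g h := Equiv.ext fun w => Subtype.ext rfl

/-- `sgn_n`: the sign of the permutation induced on level `n`. -/
noncomputable def sgn (n : ℕ) (g : OmegaSG) : ℤˣ := Equiv.Perm.sign (levelPerm n g)

/-- An odometer: an element acting transitively on every level of the tree. -/
def IsOdometer (g : OmegaSG) : Prop :=
  ∀ n : ℕ, ∀ v w : Lv n, ∃ k : ℤ, ((g ^ k : OmegaSG) : Equiv.Perm Wd) v.1 = w.1

/-! ### The profinite topology on `Aut(T)` -/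

instance : TopologicalSpace Wd := ⊥
instance : DiscreteTopology Wd := ⟨rfl⟩
instance : TopologicalSpace (Equiv.Perm Wd) :=
  TopologicalSpace.induced (fun g => (g : Wd → Wd)) Pi.topologicalSpace

lemma continuous_permCoe : Continuous (fun g : Equiv.Perm Wd => (g : Wd → Wd)) :=
  continuous_induced_dom

lemma continuous_permApply (w : Wd) : Continuous fun g : Equiv.Perm Wd => g w :=
  (continuous_apply w).comp continuous_permCoe

instance : IsTopologicalGroup (Equiv.Perm Wd) where
  continuous_mul := by
    apply continuous_induced_rng.2
    apply continuous_pi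
    intro w
    rw [continuous_discrete_rng]
    intro y
    have h : (fun p : Equiv.Perm Wd × Equiv.Perm Wd => ((p.1 * p.2 : Equiv.Perm Wd) : Wd → Wd) w) ⁻¹' {y}
        = ⋃ x : Wd, {p : Equiv.Perm Wd × Equiv.Perm Wd | p.2 w = x} ∩ {p | p.1 x = y} := by
      ext p
      simp only [Set.mem_preimage, Set.mem_singleton_iff, Set.mem_iUnion, Set.mem_inter_iff,
        Set.mem_setOf_eq, Equiv.Perm.mul_apply]
      constructor
      · intro hh; exact ⟨p.2 w, rfl, hh⟩
      · rintro ⟨x, rfl, hh⟩; exact hh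
    show IsOpen ((fun p : Equiv.Perm Wd × Equiv.Perm Wd =>
      ((p.1 * p.2 : Equiv.Perm Wd) : Wd → Wd) w) ⁻¹' {y})
    rw [h]
    refine isOpen_iUnion fun x => IsOpen.inter ?_ ?_
    · exact IsOpen.preimage ((continuous_permApply w).comp continuous_snd) (isOpen_discrete {x})
    · exact IsOpen.preimage ((continuous_permApply x).comp continuous_fst) (isOpen_discrete {y})
  continuous_inv := by
    apply continuous_induced_rng.2
    apply continuous_pi
    intro w
    rw [continuous_discrete_rng]
    intro y
    have h : (fun g : Equiv.Perm Wd => ((g⁻¹ : Equiv.Perm Wd) : Wd → Wd) w) ⁻¹' {y}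
        = {g : Equiv.Perm Wd | g y = w} := by
      ext g
      simp only [Set.mem_preimage, Set.mem_singleton_iff, Set.mem_setOf_eq]
      constructor
      · rintro rfl; simp
      · intro hh; rw [← hh]; simp
    show IsOpen ((fun g : Equiv.Perm Wd => ((g⁻¹ : Equiv.Perm Wd) : Wd → Wd) w) ⁻¹' {y})
    rw [h]
    exact IsOpen.preimage (continuous_permApply y) (isOpen_discrete {w})

/-! ### The recursive generators `a₁ = σ`, `a₂ = (a₃⁻¹, a₂⁻¹)σ`, `a₃ = (a₂, a₃)` -/

mutual
  /-- The underlying function of `a₂`. -/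
  def pA : Wd → Wd
    | [] => []
    | false :: w => true :: piA w
    | true :: w => false :: qiA w
  /-- The underlying function of `a₃`. -/
  def qA : Wd → Wd
    | [] => []
    | false :: w => false :: pA w
    | true :: w => true :: qA w
  /-- The underlying function of `a₂⁻¹`. -/
  def piA : Wd → Wd
    | [] => []
    | false :: w => true :: qA w
    | true :: w => false :: pA w
  /-- The underlying function of `a₃⁻¹`. -/
  def qiA : Wd → Wd
    | [] => []
    | false :: w => false :: piA w
    | true :: w => true :: qiA w
end

lemma a_inv_lemma : ∀ w : Wd, pA (piA w) = w ∧ piA (pA w) = w ∧ qA (qiA w) = w ∧ qiA (qA w) = w := by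
  intro w
  induction w with
  | nil => simp [pA, qA, piA, qiA]
  | cons b w ih =>
    cases b <;>
      simp [pA, qA, piA, qiA, ih.1, ih.2.1, ih.2.2.1, ih.2.2.2]

/-- The generator `a₂`. -/
def a2 : Equiv.Perm Wd where
  toFun := pA
  invFun := piA
  left_inv w := (a_inv_lemma w).2.1
  right_inv w := (a_inv_lemma w).1

/-- The generator `a₃`. -/
def a3 : Equiv.Perm Wd where
  toFun := qA
  invFun := qiA
  left_inv w := (a_inv_lemma w).2.2.2
  right_inv w := (a_inv_lemma w).2.2.1

lemma a_length_lemma : ∀ w : Wd, (pA w).length = w.length ∧ (qA w).length = w.length ∧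
    (piA w).length = w.length ∧ (qiA w).length = w.length := by
  intro w
  induction w with
  | nil => simp [pA, qA, piA, qiA]
  | cons b w ih =>
    cases b <;>
      simp [pA, qA, piA, qiA, ih.1, ih.2.1, ih.2.2.1, ih.2.2.2]

lemma a_ne_nil {f : Wd → Wd} (hf : ∀ w : Wd, (f w).length = w.length) {w : Wd} (hw : w ≠ []) :
    f w ≠ [] := by
  intro h
  exact hw (List.eq_nil_of_length_eq_zero (by rw [← hf w, h]; rfl))

lemma a_dropLast_lemma : ∀ w : Wd, (pA w).dropLast = pA w.dropLast ∧
    (qA w).dropLast = qA w.dropLast ∧ (piA w).dropLast = piA w.dropLast ∧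
    (qiA w).dropLast = qiA w.dropLast := by
  intro w
  induction w with
  | nil => simp [pA, qA, piA, qiA]
  | cons b w ih =>
    rcases eq_or_ne w [] with rfl | hw
    · cases b <;> simp [pA, qA, piA, qiA]
    · have hp := a_ne_nil (fun w => (a_length_lemma w).1) hw
      have hq := a_ne_nil (fun w => (a_length_lemma w).2.1) hw
      have hpi := a_ne_nil (fun w => (a_length_lemma w).2.2.1) hw
      have hqi := a_ne_nil (fun w => (a_length_lemma w).2.2.2) hw
      cases b <;>
        simp [pA, qA, piA, qiA, List.dropLast_cons_of_ne_nil hw,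
          List.dropLast_cons_of_ne_nil hp, List.dropLast_cons_of_ne_nil hq,
          List.dropLast_cons_of_ne_nil hpi, List.dropLast_cons_of_ne_nil hqi,
          ih.1, ih.2.1, ih.2.2.1, ih.2.2.2]

lemma a2_mem : a2 ∈ OmegaSG :=
  ⟨fun w => (a_length_lemma w).1, fun w => (a_dropLast_lemma w).1⟩

lemma a3_mem : a3 ∈ OmegaSG :=
  ⟨fun w => (a_length_lemma w).2.1, fun w => (a_dropLast_lemma w).2.1⟩

/-- `a₁ = σ` as an element of `Ω`. -/
def A1 : OmegaSG := swapOm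
/-- `a₂` as an element of `Ω`. -/
def A2 : OmegaSG := ⟨a2, a2_mem⟩
/-- `a₃` as an element of `Ω`. -/
def A3 : OmegaSG := ⟨a3, a3_mem⟩

/-- `G = ⟨⟨a₁, a₃⟩⟩`, the topological closure of the subgroup generated by `a₁` and `a₃`:
a model of the geometric iterated monodromy group of `f(x) = 2/(x-1)²`. -/
noncomputable def Ggrp : Subgroup OmegaSG :=
  (Subgroup.closure {A1, A3}).topologicalClosure

/-- The normal closure in `G` of the closed subgroup generated by an element `c`:
the closed subgroup generated by all `G`-conjugates of `c`. -/
noncomputable def nclG (c : OmegaSG) : Subgroup OmegaSG :=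
  (Subgroup.closure {x | ∃ g ∈ Ggrp, x = g * c * g⁻¹}).topologicalClosure

/-- `U`, the normal closure in `G` of `⟨⟨a₂a₃⁻¹⟩⟩`. -/
noncomputable def Ugrp : Subgroup OmegaSG := nclG (A2 * A3⁻¹)

/-- `H₁`, the normal closure in `G` of `⟨⟨a₁⟩⟩`. -/
noncomputable def H1grp : Subgroup OmegaSG := nclG A1

/-- `H₃`, the normal closure in `G` of `⟨⟨a₃⟩⟩`. -/
noncomputable def H3grp : Subgroup OmegaSG := nclG A3

/-! ### Auxiliary lemmas for Statement 7 -/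

section Stmt7Aux

@[simp] lemma pA_nil : pA [] = [] := rfl
@[simp] lemma pA_false (w : Wd) : pA (false :: w) = true :: piA w := rfl
@[simp] lemma pA_true (w : Wd) : pA (true :: w) = false :: qiA w := rfl
@[simp] lemma qA_nil : qA [] = [] := rfl
@[simp] lemma qA_false (w : Wd) : qA (false :: w) = false :: pA w := rfl
@[simp] lemma qA_true (w : Wd) : qA (true :: w) = true :: qA w := rfl
@[simp] lemma piA_nil : piA [] = [] := rfl
@[simp] lemma piA_false (w : Wd) : piA (false :: w) = true :: qA w := rfl
@[simp] lemma piA_true (w : Wd) : piA (true :: w) = false :: pA w := rfl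
@[simp] lemma qiA_nil : qiA [] = [] := rfl
@[simp] lemma qiA_false (w : Wd) : qiA (false :: w) = false :: piA w := rfl
@[simp] lemma qiA_true (w : Wd) : qiA (true :: w) = true :: qiA w := rfl

@[simp] lemma pA_piA (w : Wd) : pA (piA w) = w := (a_inv_lemma w).1
@[simp] lemma piA_pA (w : Wd) : piA (pA w) = w := (a_inv_lemma w).2.1
@[simp] lemma qA_qiA (w : Wd) : qA (qiA w) = w := (a_inv_lemma w).2.2.1
@[simp] lemma qiA_qA (w : Wd) : qiA (qA w) = w := (a_inv_lemma w).2.2.2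

@[simp] lemma swap_swap (w : Wd) : swapPerm (swapPerm w) = w := by
  rcases w with _ | ⟨b, w⟩ <;> simp

/-- `a₂ a₃ = σ` at the level of functions. -/
lemma pAqA (w : Wd) : pA (qA w) = swapPerm w := by
  rcases w with _ | ⟨(_ | _), w⟩ <;> simp

/-- `a₃⁻¹ a₂⁻¹ = σ` at the level of functions. -/
lemma qipi (w : Wd) : qiA (piA w) = swapPerm w := by
  rcases w with _ | ⟨(_ | _), w⟩ <;> simp

/-- `(a₃ a₂)² = 1` at the level of functions. -/
lemma qApA2 (w : Wd) : qA (pA (qA (pA w))) = w := by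
  rcases w with _ | ⟨(_ | _), w⟩ <;> simp

/-- `a₂⁻¹ a₃⁻¹ = a₃ a₂` at the level of functions. -/
lemma piqi (w : Wd) : piA (qiA w) = qA (pA w) := by
  have h := qApA2 (piA (qiA w))
  simp only [pA_piA, qA_qiA] at h
  exact h.symm

/-- `a₂ a₃ a₂ = a₃⁻¹` at the level of functions. -/
lemma sts_fun (w : Wd) : pA (qA (pA w)) = qiA w := by
  rcases w with _ | ⟨(_ | _), w⟩ <;> simp

/-- `a₂⁴ = 1` at the level of functions. -/
lemma pA4 (w : Wd) : pA (pA (pA (pA w))) = w := by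
  rcases w with _ | ⟨(_ | _), w⟩
  · rfl
  · simp [qipi]
  · simp [piqi]

/-- `a₃⁴ = 1` at the level of functions. -/
lemma qA4 (w : Wd) : qA (qA (qA (qA w))) = w := by
  induction w with
  | nil => rfl
  | cons b w ih => cases b <;> simp [pA4, ih]

lemma ss_fun (w : Wd) : piA (piA w) = pA (pA w) := by
  have h : piA (piA (pA (pA (pA (pA w))))) = pA (pA w) := by simp
  rw [pA4 w] at h; exact h

lemma pi3 (w : Wd) : piA (piA (piA w)) = pA w := by
  have h : piA (piA (piA (pA (pA (pA (pA w)))))) = pA w := by simp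
  rw [pA4 w] at h; exact h

lemma tt_fun (w : Wd) : qiA (qiA w) = qA (qA w) := by
  have h : qiA (qiA (qA (qA (qA (qA w))))) = qA (qA w) := by simp
  rw [qA4 w] at h; exact h

lemma qi3 (w : Wd) : qiA (qiA (qiA w)) = qA w := by
  have h : qiA (qiA (qiA (qA (qA (qA (qA w)))))) = qA w := by simp
  rw [qA4 w] at h; exact h

/-- `a₁ γ₁ a₁⁻¹ = γ₁⁻¹` at the level of functions. -/
lemma f1 (w : Wd) : swapPerm (pA (qiA (swapPerm w))) = qA (piA w) := by
  rcases w with _ | ⟨(_ | _), w⟩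
  · rfl
  · simp [tt_fun]
  · simp [ss_fun]

/-- `a₁ γ₂ a₁⁻¹ = γ₂⁻¹` at the level of functions. -/
lemma f2 (w : Wd) : swapPerm (qiA (pA (swapPerm w))) = piA (qA w) := by
  rcases w with _ | ⟨(_ | _), w⟩
  · rfl
  · simp [piqi]
  · simp [qipi, pAqA]

/-- `a₃ γ₁ a₃⁻¹ = γ₂⁻¹` at the level of functions. -/
lemma f3 (w : Wd) : qA (pA (qiA (qiA w))) = piA (qA w) := by
  rcases w with _ | ⟨(_ | _), w⟩
  · rfl
  · simp [pi3]
  · simp [qi3]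

@[simp] lemma a2_apply (w : Wd) : a2 w = pA w := rfl
@[simp] lemma a3_apply (w : Wd) : a3 w = qA w := rfl
@[simp] lemma a2_inv_apply (w : Wd) : a2⁻¹ w = piA w := rfl
@[simp] lemma a3_inv_apply (w : Wd) : a3⁻¹ w = qiA w := rfl
@[simp] lemma a2_symm_apply (w : Wd) : a2.symm w = piA w := rfl
@[simp] lemma a3_symm_apply (w : Wd) : a3.symm w = qiA w := rfl

lemma swap_inv : swapPerm⁻¹ = swapPerm := Equiv.ext fun w => rfl

/-- `a₁ γ₁ a₁⁻¹ = γ₁⁻¹` as permutations. -/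
lemma P1 : swapPerm * (a2 * a3⁻¹) * swapPerm⁻¹ = (a2 * a3⁻¹)⁻¹ := by
  rw [mul_inv_rev, inv_inv, swap_inv]
  apply Equiv.ext; intro w
  simpa using f1 w

/-- `a₁ γ₂ a₁⁻¹ = γ₂⁻¹` as permutations. -/
lemma P2 : swapPerm * (a3⁻¹ * a2) * swapPerm⁻¹ = (a3⁻¹ * a2)⁻¹ := by
  rw [mul_inv_rev, inv_inv, swap_inv]
  apply Equiv.ext; intro w
  simpa using f2 w

/-- `a₃ γ₁ a₃⁻¹ = γ₂⁻¹` as permutations. -/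
lemma P3 : a3 * (a2 * a3⁻¹) * a3⁻¹ = (a3⁻¹ * a2)⁻¹ := by
  rw [mul_inv_rev, inv_inv]
  apply Equiv.ext; intro w
  simpa using f3 w

/-- `a₃ γ₂ a₃⁻¹ = γ₁` as permutations. -/
lemma P4 : a3 * (a3⁻¹ * a2) * a3⁻¹ = a2 * a3⁻¹ := by group

lemma C1 : A1 * (A2 * A3⁻¹) * A1⁻¹ = (A2 * A3⁻¹)⁻¹ := Subtype.ext P1
lemma C2 : A1 * (A3⁻¹ * A2) * A1⁻¹ = (A3⁻¹ * A2)⁻¹ := Subtype.ext P2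
lemma C3 : A3 * (A2 * A3⁻¹) * A3⁻¹ = (A3⁻¹ * A2)⁻¹ := Subtype.ext P3
lemma C4 : A3 * (A3⁻¹ * A2) * A3⁻¹ = A2 * A3⁻¹ := Subtype.ext P4

/-- The set `{γ₁, γ₁⁻¹, γ₂, γ₂⁻¹}`. -/
def TS : Set OmegaSG :=
  {A2 * A3⁻¹, (A2 * A3⁻¹)⁻¹, A3⁻¹ * A2, (A3⁻¹ * A2)⁻¹}

lemma conj_inv_eq (a x : OmegaSG) : a * x⁻¹ * a⁻¹ = (a * x * a⁻¹)⁻¹ := by group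

lemma A1_conj_TS : (fun x => A1 * x * A1⁻¹) '' TS = TS := by
  simp only [TS, Set.image_insert_eq, Set.image_singleton, conj_inv_eq, C1, C2]
  ext x
  simp only [Set.mem_insert_iff, Set.mem_singleton_iff, inv_inv]
  tauto

lemma A3_conj_TS : (fun x => A3 * x * A3⁻¹) '' TS = TS := by
  simp only [TS, Set.image_insert_eq, Set.image_singleton, conj_inv_eq, C3, C4]
  ext x
  simp only [Set.mem_insert_iff, Set.mem_singleton_iff, inv_inv]
  tauto

lemma conj_TS : ∀ g ∈ Subgroup.closure {A1, A3}, (fun x => g * x * g⁻¹) '' TS = TS := by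
  intro g hg
  refine Subgroup.closure_induction (p := fun g _ => (fun x => g * x * g⁻¹) '' TS = TS)
    ?_ ?_ ?_ ?_ hg
  · rintro x (rfl | rfl)
    · exact A1_conj_TS
    · exact A3_conj_TS
  · simp
  · intro x y _ _ hx hy
    have : (fun t => x * y * t * (x * y)⁻¹) = (fun t => x * t * x⁻¹) ∘ (fun t => y * t * y⁻¹) := by
      funext t
      simp only [Function.comp_apply]
      group
    rw [this, Set.image_comp, hy, hx]
  · intro x _ hx
    conv_lhs => rw [← hx, ← Set.image_comp]
    have : ((fun t => x⁻¹ * t * x⁻¹⁻¹) ∘ fun t => x * t * x⁻¹) = id := by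
      funext t
      simp only [Function.comp_apply, id_eq]
      group
    rw [this, Set.image_id]

lemma conj_gamma1_mem (g : OmegaSG) (hg : g ∈ Subgroup.closure {A1, A3}) :
    g * (A2 * A3⁻¹) * g⁻¹ ∈ TS := by
  rw [← conj_TS g hg]
  exact ⟨A2 * A3⁻¹, Or.inl rfl, rfl⟩

lemma TS_subset : TS ⊆ (Subgroup.closure {A2 * A3⁻¹, A3⁻¹ * A2} : Subgroup OmegaSG) := by
  have h1 : A2 * A3⁻¹ ∈ Subgroup.closure {A2 * A3⁻¹, A3⁻¹ * A2} :=
    Subgroup.subset_closure (Or.inl rfl)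
  have h2 : A3⁻¹ * A2 ∈ Subgroup.closure {A2 * A3⁻¹, A3⁻¹ * A2} :=
    Subgroup.subset_closure (Or.inr rfl)
  rintro x (rfl | rfl | rfl | rfl)
  · exact h1
  · exact inv_mem h1
  · exact h2
  · exact inv_mem h2

end Stmt7Aux

/-- The normal closure `U` in `G` of `⟨⟨a₂a₃⁻¹⟩⟩` is topologically
generated by `γ₁ = a₂a₃⁻¹` and `γ₂ = a₃⁻¹a₂`. -/
theorem stmt7 :
    Ugrp = (Subgroup.closure {A2 * A3⁻¹, A3⁻¹ * A2}).topologicalClosure := by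
  apply le_antisymm
  · -- `U ≤ ⟨⟨γ₁, γ₂⟩⟩`
    refine Subgroup.topologicalClosure_minimal _ ((Subgroup.closure_le _).2 ?_)
      (Subgroup.isClosed_topologicalClosure _)
    rintro x ⟨g, hg, rfl⟩
    have hcont : Continuous (fun h : OmegaSG => h * (A2 * A3⁻¹) * h⁻¹) :=
      (continuous_id.mul continuous_const).mul continuous_inv
    have hg' : g ∈ _root_.closure ((Subgroup.closure {A1, A3} : Subgroup OmegaSG) : Set OmegaSG) :=
      hg
    have himg : (fun h : OmegaSG => h * (A2 * A3⁻¹) * h⁻¹) ''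
        ((Subgroup.closure {A1, A3} : Subgroup OmegaSG) : Set OmegaSG) ⊆
        ((Subgroup.closure {A2 * A3⁻¹, A3⁻¹ * A2} : Subgroup OmegaSG) : Set OmegaSG) := by
      rintro y ⟨h, hh, rfl⟩
      exact TS_subset (conj_gamma1_mem h hh)
    have : g * (A2 * A3⁻¹) * g⁻¹ ∈
        _root_.closure ((Subgroup.closure {A2 * A3⁻¹, A3⁻¹ * A2} : Subgroup OmegaSG) :
          Set OmegaSG) :=
      closure_mono himg (image_closure_subset_closure_image hcont ⟨g, hg', rfl⟩)
    exact this
  · -- `⟨⟨γ₁, γ₂⟩⟩ ≤ U`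
    refine Subgroup.topologicalClosure_minimal _ ((Subgroup.closure_le _).2 ?_)
      (Subgroup.isClosed_topologicalClosure _)
    have hG : ∀ g, g ∈ Subgroup.closure {A1, A3} → g ∈ Ggrp := fun g hgg =>
      Subgroup.le_topologicalClosure _ hgg
    rintro x (rfl | rfl)
    · refine Subgroup.le_topologicalClosure _ (Subgroup.subset_closure ?_)
      exact ⟨1, one_mem _, by group⟩
    · refine Subgroup.le_topologicalClosure _ (Subgroup.subset_closure ?_)
      refine ⟨A3⁻¹, inv_mem (hG A3 (Subgroup.subset_closure (Or.inr rfl))), ?_⟩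
      group
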